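/- arXiv:2105.07587 — 4 statements merged into one kernel-verified Lean document; each statement's English description precedes it below -/
import Mathlib

section
/- Isotonic regression is 1-Lipschitz in the l1 norm in the following summed sense: for any fixed ordering and any y, y' in R^n, sum_{i=1}^n |iso(y)_i - iso(y')_i| <= sum_{i=1}^n |y_i - y'_i|. Consequently, for any vector a in R^n with entries bounded by M_x, the map y -> <a, iso(y)> is M_x-Lipschitz with respect to the l1 metric on R^n. -/
open Finset

section Aux

variable {n : ℕ} (r : Fin n → Fin n → Prop)
  (iso : (Fin n → ℝ) → (Fin n → ℝ))
  (hiso : ∀ v : Fin n → ℝ,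
      (∀ i j, r i j → iso v i ≤ iso v j) ∧
      ∀ z : Fin n → ℝ, (∀ i j, r i j → z i ≤ z j) →
        ∑ i, (v i - iso v i) ^ 2 ≤ ∑ i, (v i - z i) ^ 2)

include hiso

/-- First-order optimality condition for the projection. -/
lemma iso_foc (y z : Fin n → ℝ) (hz : ∀ i j, r i j → z i ≤ z j) :
    ∑ i, (y i - iso y i) * (z i - iso y i) ≤ 0 := by
  set u := iso y with hu
  by_contra hcon
  push_neg at hcon
  set c := ∑ i, (y i - u i) * (z i - u i) with hc
  set q := ∑ i, (z i - u i) ^ 2 with hqdef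
  have hq0 : 0 ≤ q := Finset.sum_nonneg fun i _ => sq_nonneg _
  have hqpos : 0 < q := by
    rcases hq0.lt_or_eq with h | h
    · exact h
    · exfalso
      have hz0 : ∀ i, (z i - u i) ^ 2 = 0 := by
        intro i
        exact (Finset.sum_eq_zero_iff_of_nonneg
          (fun i _ => sq_nonneg (z i - u i))).1 h.symm i (Finset.mem_univ i)
      have : c = 0 := Finset.sum_eq_zero fun i _ => by
        have h2 := hz0 i
        have h3 : z i - u i = 0 := by nlinarith
        rw [h3]; ring
      linarith
  set t := min 1 (c / q) with ht
  have htpos : 0 < t := lt_min one_pos (div_pos hcon hqpos)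
  have ht1 : t ≤ 1 := min_le_left _ _
  have htc : t * q ≤ c := by
    have h' : t ≤ c / q := min_le_right _ _
    calc t * q ≤ (c / q) * q := by nlinarith
      _ = c := div_mul_cancel₀ c hqpos.ne'
  have hmono : ∀ i j, r i j → u i + t * (z i - u i) ≤ u j + t * (z j - u j) := by
    intro i j hij
    have h1 := (hiso y).1 i j hij
    have h2 := hz i j hij
    nlinarith
  have hmin := (hiso y).2 (fun i => u i + t * (z i - u i)) hmono
  have hexp : ∑ i, (y i - (u i + t * (z i - u i))) ^ 2
      = ∑ i, (y i - u i) ^ 2 - 2 * t * c + t ^ 2 * q := by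
    rw [hc, hqdef, Finset.mul_sum, Finset.mul_sum, ← Finset.sum_sub_distrib,
      ← Finset.sum_add_distrib]
    exact Finset.sum_congr rfl fun i _ => by ring
  rw [← hu, hexp] at hmin
  nlinarith [mul_pos htpos hcon]

/-- The projection preserves the total sum. -/
lemma iso_sum (y : Fin n → ℝ) : ∑ i, iso y i = ∑ i, y i := by
  have h1 := iso_foc r iso hiso y (fun i => iso y i + 1)
    (fun i j h => by have := (hiso y).1 i j h; linarith)
  have h2 := iso_foc r iso hiso y (fun i => iso y i - 1)
    (fun i j h => by have := (hiso y).1 i j h; linarith)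
  have e1 : ∑ i, (y i - iso y i) ≤ 0 := by
    calc ∑ i, (y i - iso y i)
        = ∑ i, (y i - iso y i) * ((iso y i + 1) - iso y i) :=
          Finset.sum_congr rfl fun i _ => by ring
      _ ≤ 0 := h1
  have e2 : ∑ i, (iso y i - y i) ≤ 0 := by
    calc ∑ i, (iso y i - y i)
        = ∑ i, (y i - iso y i) * ((iso y i - 1) - iso y i) :=
          Finset.sum_congr rfl fun i _ => by ring
      _ ≤ 0 := h2
  rw [Finset.sum_sub_distrib] at e1 e2
  linarith

/-- The projection is monotone. -/
lemma iso_mono (y y' : Fin n → ℝ) (hle : ∀ i, y i ≤ y' i) : ∀ i, iso y i ≤ iso y' i := by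
  set u := iso y with hu
  set v := iso y' with hv
  set p := fun i => max (u i - v i) 0 with hp
  have hmonou := (hiso y).1
  have hmonov := (hiso y').1
  rw [← hu] at hmonou
  rw [← hv] at hmonov
  have hminid : ∀ i, min (u i) (v i) - u i = -(p i) := by
    intro i
    rcases le_total (u i) (v i) with h | h
    · simp [hp, min_eq_left h, max_eq_right (by linarith : u i - v i ≤ 0)]
    · simp only [hp, min_eq_right h, max_eq_left (by linarith : (0:ℝ) ≤ u i - v i)]
      ring
  have hmaxid : ∀ i, max (u i) (v i) - v i = p i := by
    intro i
    rcases le_total (u i) (v i) with h | h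
    · simp [hp, max_eq_right h, max_eq_right (by linarith : u i - v i ≤ 0)]
    · simp only [hp, max_eq_left h, max_eq_left (by linarith : (0:ℝ) ≤ u i - v i)]
  have hp2 : ∀ i, p i ^ 2 = (u i - v i) * p i := by
    intro i
    rcases le_total (u i - v i) 0 with h | h
    · simp [hp, max_eq_right h]
    · simp only [hp, max_eq_left h]; ring
  have h1 := iso_foc r iso hiso y (fun i => min (u i) (v i))
    (fun i j h => min_le_min (hmonou i j h) (hmonov i j h))
  have h2 := iso_foc r iso hiso y' (fun i => max (u i) (v i))
    (fun i j h => max_le_max (hmonou i j h) (hmonov i j h))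
  rw [← hu] at h1
  rw [← hv] at h2
  have e1 : ∑ i, (y i - u i) * (-(p i)) ≤ 0 := by
    calc ∑ i, (y i - u i) * (-(p i))
        = ∑ i, (y i - u i) * (min (u i) (v i) - u i) :=
          Finset.sum_congr rfl fun i _ => by rw [hminid i]
      _ ≤ 0 := h1
  have e1' : 0 ≤ ∑ i, (y i - u i) * p i := by
    have hneg : ∑ i, (y i - u i) * (-(p i)) = -∑ i, (y i - u i) * p i := by
      rw [← Finset.sum_neg_distrib]
      exact Finset.sum_congr rfl fun i _ => by ring
    rw [hneg] at e1
    linarith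
  have e2 : ∑ i, (y' i - v i) * p i ≤ 0 := by
    calc ∑ i, (y' i - v i) * p i
        = ∑ i, (y' i - v i) * (max (u i) (v i) - v i) :=
          Finset.sum_congr rfl fun i _ => by rw [hmaxid i]
      _ ≤ 0 := h2
  have e3 : 0 ≤ ∑ i, (y' i - y i) * p i :=
    Finset.sum_nonneg fun i _ => mul_nonneg (by linarith [hle i]) (le_max_right _ _)
  have key : ∑ i, p i ^ 2 ≤ 0 := by
    have eq : ∑ i, p i ^ 2
        = ∑ i, (y' i - v i) * p i - ∑ i, (y i - u i) * p i - ∑ i, (y' i - y i) * p i := by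
      rw [← Finset.sum_sub_distrib, ← Finset.sum_sub_distrib]
      refine Finset.sum_congr rfl fun i _ => ?_
      rw [hp2 i]; ring
    rw [eq]
    linarith
  have hzero : ∀ i, p i ^ 2 = 0 := fun i =>
    (Finset.sum_eq_zero_iff_of_nonneg (fun i _ => sq_nonneg (p i))).1
      (le_antisymm key (Finset.sum_nonneg fun i _ => sq_nonneg _)) i (Finset.mem_univ i)
  intro i
  have hpi : p i = 0 := by
    have := hzero i
    nlinarith
  have : u i - v i ≤ p i := le_max_left _ _
  rw [hpi] at this
  linarith

/-- Contraction step for comparable vectors. -/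
lemma iso_step (y y' : Fin n → ℝ) (hle : ∀ i, y i ≤ y' i) :
    ∑ i, |iso y i - iso y' i| ≤ ∑ i, |y i - y' i| := by
  have hm := iso_mono r iso hiso y y' hle
  have l : ∑ i, |iso y i - iso y' i| = ∑ i, (iso y' i - iso y i) :=
    Finset.sum_congr rfl fun i _ => by
      rw [abs_sub_comm, abs_of_nonneg (by linarith [hm i])]
  have rr : ∑ i, |y i - y' i| = ∑ i, (y' i - y i) :=
    Finset.sum_congr rfl fun i _ => by
      rw [abs_sub_comm, abs_of_nonneg (by linarith [hle i])]
  rw [l, rr, Finset.sum_sub_distrib, Finset.sum_sub_distrib,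
    iso_sum r iso hiso y, iso_sum r iso hiso y']

/-- Contraction for vectors differing in one coordinate. -/
lemma iso_one_coord (y : Fin n → ℝ) (k : Fin n) (c : ℝ) :
    ∑ i, |iso y i - iso (Function.update y k c) i| ≤ ∑ i, |y i - Function.update y k c i| := by
  rcases le_total (y k) c with h | h
  · exact iso_step r iso hiso y _ (fun i => by
      rcases eq_or_ne i k with rfl | hik
      · simp [h]
      · simp [Function.update_of_ne hik])
  · have hs := iso_step r iso hiso (Function.update y k c) y (fun i => by
      rcases eq_or_ne i k with rfl | hik
      · simp [h]
      · simp [Function.update_of_ne hik])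
    calc ∑ i, |iso y i - iso (Function.update y k c) i|
        = ∑ i, |iso (Function.update y k c) i - iso y i| :=
          Finset.sum_congr rfl fun i _ => abs_sub_comm _ _
      _ ≤ ∑ i, |Function.update y k c i - y i| := hs
      _ = ∑ i, |y i - Function.update y k c i| :=
          Finset.sum_congr rfl fun i _ => abs_sub_comm _ _

/-- Main ℓ₁-contraction, by induction on the set of differing coordinates. -/
lemma iso_l1 : ∀ S : Finset (Fin n), ∀ y y' : Fin n → ℝ, (∀ i, i ∉ S → y i = y' i) →
    ∑ i, |iso y i - iso y' i| ≤ ∑ i, |y i - y' i| := by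
  intro S
  induction S using Finset.induction_on with
  | empty =>
    intro y y' h
    have hyy : y = y' := funext fun i => h i (Finset.notMem_empty i)
    subst hyy
    simp
  | @insert k S hk ih =>
    intro y y' h
    set w := Function.update y k (y' k) with hw
    have h1 := iso_one_coord r iso hiso y k (y' k)
    have h2 := ih w y' (fun i hi => by
      rcases eq_or_ne i k with rfl | hik
      · simp [hw]
      · rw [hw, Function.update_of_ne hik]
        exact h i (by simp [Finset.mem_insert, hik, hi]))
    have tri : ∑ i, |iso y i - iso y' i|
        ≤ ∑ i, |iso y i - iso w i| + ∑ i, |iso w i - iso y' i| := by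
      rw [← Finset.sum_add_distrib]
      exact Finset.sum_le_sum fun i _ => abs_sub_le _ _ _
    have req : ∑ i, |y i - w i| + ∑ i, |w i - y' i| = ∑ i, |y i - y' i| := by
      rw [← Finset.sum_add_distrib]
      refine Finset.sum_congr rfl fun i _ => ?_
      rcases eq_or_ne i k with rfl | hik
      · simp [hw]
      · simp [hw, Function.update_of_ne hik]
    rw [← hw] at h1
    linarith

end Aux

/-- Isotonic regression (projection onto the monotone cone of a fixed order `r`)
is 1-Lipschitz in the ℓ₁ norm: `∑ |iso(y)ᵢ - iso(y')ᵢ| ≤ ∑ |yᵢ - y'ᵢ|`.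
Consequently, for any `a` with entries bounded by `Mx`, the map `y ↦ ⟨a, iso(y)⟩`
is `Mx`-Lipschitz with respect to the ℓ₁ metric. -/
theorem stmt_7 (n : ℕ) (r : Fin n → Fin n → Prop)
    (iso : (Fin n → ℝ) → (Fin n → ℝ))
    (hiso : ∀ v : Fin n → ℝ,
      (∀ i j, r i j → iso v i ≤ iso v j) ∧
      ∀ z : Fin n → ℝ, (∀ i j, r i j → z i ≤ z j) →
        ∑ i, (v i - iso v i) ^ 2 ≤ ∑ i, (v i - z i) ^ 2)
    (Mx : ℝ) (a : Fin n → ℝ) (ha : ∀ i, |a i| ≤ Mx)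
    (y y' : Fin n → ℝ) :
    (∑ i, |iso y i - iso y' i| ≤ ∑ i, |y i - y' i|) ∧
    |(∑ i, a i * iso y i) - ∑ i, a i * iso y' i| ≤ Mx * ∑ i, |y i - y' i| := by
  have key := iso_l1 r iso hiso Finset.univ y y'
    (fun i hi => absurd (Finset.mem_univ i) hi)
  refine ⟨key, ?_⟩
  have habs : |(∑ i, a i * iso y i) - ∑ i, a i * iso y' i|
      ≤ ∑ i, Mx * |iso y i - iso y' i| := by
    rw [← Finset.sum_sub_distrib]
    refine le_trans (Finset.abs_sum_le_sum_abs _ _) (Finset.sum_le_sum fun i _ => ?_)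
    rw [← mul_sub, abs_mul]
    exact mul_le_mul_of_nonneg_right (ha i) (abs_nonneg _)
  rw [← Finset.mul_sum] at habs
  rcases Nat.eq_zero_or_pos n with hn | hn
  · subst hn
    simp
  · have hMx : 0 ≤ Mx := le_trans (abs_nonneg _) (ha ⟨0, hn⟩)
    calc |(∑ i, a i * iso y i) - ∑ i, a i * iso y' i|
        ≤ Mx * ∑ i, |iso y i - iso y' i| := habs
      _ ≤ Mx * ∑ i, |y i - y' i| := mul_le_mul_of_nonneg_left key hMx
end

section
/- Let u in R^p be a unit vector with support S of size at most s, let P_S denote coordinate projection onto S, and let P_{u}^perp denote orthogonal projection onto the hyperplane orthogonal to u. Then for any vector v in R^p and step size eta > 0, the hard thresholding of w = u + eta * P_{u}^perp(v) at level s satisfies ||Psi_s(w)||_2 >= 1. Consequently Psi_s(w)/||Psi_s(w)||_2 is the projection of Psi_s(w) onto the unit ball, and for any unit vector u_star, || Psi_s(w)/||Psi_s(w)||_2 - u_star ||_2 <= || Psi_s(w) - u_star ||_2. -/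
open scoped Classical

/-- Normalization step: for a unit `s`-sparse vector `u` with support contained in
`S` (`|S| ≤ s`), and `w = u + η P_u^⊥ v`, the hard thresholding `Ψ` of `w` at level
`s` has norm at least `1`; consequently normalizing `Ψ` is a projection onto the
unit ball and can only decrease the distance to any unit vector `u⋆`. -/
theorem stmt_10 (p s : ℕ) (hs : 0 < s) (hsp : s ≤ p)
    (u : EuclideanSpace ℝ (Fin p)) (hu : ‖u‖ = 1)
    (S : Finset (Fin p)) (hSsupp : ∀ i, u i ≠ 0 → i ∈ S) (hScard : S.card ≤ s)
    (v : EuclideanSpace ℝ (Fin p)) (η : ℝ) (hη : 0 < η)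
    (w : EuclideanSpace ℝ (Fin p))
    (hw : w = u + η • (v - (inner ℝ v u : ℝ) • u))
    (T : Finset (Fin p)) (hT : T.card = s)
    (hdom : ∀ i ∈ T, ∀ j ∉ T, |w j| ≤ |w i|)
    (Ψ : EuclideanSpace ℝ (Fin p)) (hΨ : ∀ i, Ψ i = if i ∈ T then w i else 0)
    (ustar : EuclideanSpace ℝ (Fin p)) (hustar : ‖ustar‖ = 1) :
    1 ≤ ‖Ψ‖ ∧ ‖(1 / ‖Ψ‖) • Ψ - ustar‖ ≤ ‖Ψ - ustar‖ := by
  -- coordinate formula for w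
  have hwcoord : ∀ i, w i = u i + η * (v i - (inner ℝ v u : ℝ) * u i) := by
    intro i
    rw [hw]
    simp [PiLp.add_apply, PiLp.smul_apply, PiLp.sub_apply, smul_eq_mul]
  have husum : ∑ i, u i ^ 2 = 1 := by
    have h0 := EuclideanSpace.norm_eq u
    rw [hu] at h0
    have h1 : (∑ i, ‖u i‖ ^ 2) = ∑ i, u i ^ 2 := by
      simp [Real.norm_eq_abs, sq_abs]
    rw [h1] at h0
    have h2 : Real.sqrt (∑ i, u i ^ 2) = 1 := h0.symm
    have := Real.sqrt_eq_one.mp h2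
    simpa using this
  have hinner : (inner ℝ v u : ℝ) = ∑ i, v i * u i := by
    simp [PiLp.inner_apply, RCLike.inner_apply, mul_comm]
  -- sum over S of w^2 is ≥ 1
  have hSsum : 1 ≤ ∑ i ∈ S, w i ^ 2 := by
    set c : ℝ := (inner ℝ v u : ℝ) with hc
    set z : Fin p → ℝ := fun i => η * (v i - c * u i) with hz
    have hzsupp : ∀ i ∉ S, u i = 0 := fun i hi => by
      by_contra h; exact hi (hSsupp i h)
    have hsum1 : ∑ i ∈ S, u i ^ 2 = 1 := by
      rw [← husum]
      exact Finset.sum_subset (Finset.subset_univ S)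
        (fun i _ hi => by rw [hzsupp i hi]; ring)
    have hsum2 : ∑ i ∈ S, u i * z i = 0 := by
      have h1 : ∑ i ∈ S, u i * z i = ∑ i, u i * z i := by
        refine Finset.sum_subset (Finset.subset_univ S) ?_
        intro i _ hi
        rw [hzsupp i hi]; ring
      rw [h1]
      have hpt : ∀ i, u i * z i = η * (v i * u i) - (η * c) * u i ^ 2 := by
        intro i; simp only [hz]; ring
      rw [Finset.sum_congr rfl (fun i _ => hpt i), Finset.sum_sub_distrib,
        ← Finset.mul_sum, ← Finset.mul_sum, husum, hinner]
      ring
    have hexp : ∑ i ∈ S, w i ^ 2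
        = (∑ i ∈ S, u i ^ 2) + 2 * (∑ i ∈ S, u i * z i) + ∑ i ∈ S, z i ^ 2 := by
      rw [Finset.mul_sum, ← Finset.sum_add_distrib, ← Finset.sum_add_distrib]
      apply Finset.sum_congr rfl
      intro i _
      rw [hwcoord i]
      simp only [hz]; ring
    rw [hexp, hsum1, hsum2]
    have : 0 ≤ ∑ i ∈ S, z i ^ 2 := Finset.sum_nonneg fun i _ => sq_nonneg _
    linarith
  -- sum over S ≤ sum over T
  have hST : ∑ i ∈ S, w i ^ 2 ≤ ∑ i ∈ T, w i ^ 2 := by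
    have hsplit1 : ∑ i ∈ S, w i ^ 2
        = ∑ i ∈ S ∩ T, w i ^ 2 + ∑ i ∈ S \ T, w i ^ 2 := by
      rw [← Finset.sum_inter_add_sum_sdiff]
    have hsplit2 : ∑ i ∈ T, w i ^ 2
        = ∑ i ∈ T ∩ S, w i ^ 2 + ∑ i ∈ T \ S, w i ^ 2 := by
      rw [← Finset.sum_inter_add_sum_sdiff]
    rw [hsplit1, hsplit2, Finset.inter_comm]
    have hcard : (S \ T).card ≤ (T \ S).card := by
      have h1 := Finset.card_sdiff_add_card_inter S T
      have h2 := Finset.card_sdiff_add_card_inter T S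
      have h3 : (S ∩ T).card = (T ∩ S).card := by rw [Finset.inter_comm]
      omega
    have key : ∑ i ∈ S \ T, w i ^ 2 ≤ ∑ i ∈ T \ S, w i ^ 2 := by
      rcases Finset.eq_empty_or_nonempty (T \ S) with hTS | hTS
      · have h0 : (S \ T).card = 0 := by
          rw [hTS] at hcard; simpa using hcard
        rw [Finset.card_eq_zero.mp h0, hTS]
      · obtain ⟨i0, hi0, hmin⟩ := Finset.exists_min_image (T \ S) (fun i => w i ^ 2) hTS
        have hi0T : i0 ∈ T := (Finset.mem_sdiff.mp hi0).1
        calc ∑ j ∈ S \ T, w j ^ 2 ≤ ∑ _j ∈ S \ T, w i0 ^ 2 := by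
              apply Finset.sum_le_sum
              intro j hj
              have hjT : j ∉ T := (Finset.mem_sdiff.mp hj).2
              have := hdom i0 hi0T j hjT
              calc w j ^ 2 = |w j| ^ 2 := (sq_abs _).symm
                _ ≤ |w i0| ^ 2 := by
                    apply pow_le_pow_left₀ (abs_nonneg _) this
                _ = w i0 ^ 2 := sq_abs _
          _ = (S \ T).card • w i0 ^ 2 := by rw [Finset.sum_const]
          _ ≤ (T \ S).card • w i0 ^ 2 := by
              apply nsmul_le_nsmul_left _ hcard
              positivity
          _ ≤ ∑ i ∈ T \ S, w i ^ 2 := Finset.card_nsmul_le_sum _ _ _ hmin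
    linarith
  -- norm of Ψ squared
  have hΨsq : ‖Ψ‖ ^ 2 = ∑ i ∈ T, w i ^ 2 := by
    rw [← real_inner_self_eq_norm_sq]
    rw [PiLp.inner_apply]
    simp only [RCLike.inner_apply, conj_trivial]
    rw [← Finset.sum_subset (Finset.subset_univ T)
      (fun i _ hi => by rw [hΨ i]; simp [hi])]
    apply Finset.sum_congr rfl
    intro i hi
    rw [hΨ i]
    simp [hi]; ring
  have hΨnorm : 1 ≤ ‖Ψ‖ := by
    nlinarith [norm_nonneg Ψ]
  refine ⟨hΨnorm, ?_⟩
  -- contraction part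
  set t : ℝ := ‖Ψ‖ with ht
  have ht0 : 0 < t := lt_of_lt_of_le one_pos hΨnorm
  set c : ℝ := (inner ℝ Ψ ustar : ℝ) with hc
  have hcs : c ≤ t := by
    calc c ≤ ‖Ψ‖ * ‖ustar‖ := real_inner_le_norm Ψ ustar
      _ = t := by rw [hustar, ← ht]; ring
  have hcs2 : -t ≤ c := by
    have h := abs_real_inner_le_norm Ψ ustar
    rw [hustar, ← hc, ← ht, mul_one] at h
    have := neg_abs_le c
    linarith [abs_le.mp h]
  have hn1 : ‖(1 / t) • Ψ - ustar‖ ^ 2 = 2 - 2 * (c / t) := by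
    rw [norm_sub_sq_real]
    rw [norm_smul, inner_smul_left]
    simp only [conj_trivial]
    rw [hustar, ← hc, ← ht]
    rw [Real.norm_eq_abs, abs_of_pos (by positivity : (0:ℝ) < 1 / t)]
    field_simp
    ring
  have hn2 : ‖Ψ - ustar‖ ^ 2 = t ^ 2 - 2 * c + 1 := by
    rw [norm_sub_sq_real, hustar, ← hc, ← ht]
    ring
  have hsqle : ‖(1 / t) • Ψ - ustar‖ ^ 2 ≤ ‖Ψ - ustar‖ ^ 2 := by
    rw [hn1, hn2]
    have hct : c / t * t = c := div_mul_cancel₀ c (ne_of_gt ht0)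
    have hineq : (2 - 2 * (c / t)) * t ≤ (t ^ 2 - 2 * c + 1) * t := by
      nlinarith [hct, hcs, hcs2, ht0, hΨnorm, sq_nonneg (t - 1),
        mul_nonneg (sq_nonneg (t - 1)) ht0.le]
    exact (mul_le_mul_iff_of_pos_right ht0).mp hineq
  nlinarith [norm_nonneg ((1 / t) • Ψ - ustar), norm_nonneg (Ψ - ustar), hsqle]
end

section
/- For any vectors u (with ||u||_2 = 1), w, and u_star in R^p with <u, u_star> >= 0, and any vectors a in R^n, b in R^n such that <a, Xu> <= 0 where iso denotes projection onto the monotone cone of Xu: if a = g(Xu_star) - iso_{Xu}(g(Xu_star)) and g is L-Lipschitz monotone, then <a, X P_u^perp u_star> >= (1/L) ||a||_2^2, where P_u^perp u_star = u_star - u <u, u_star>. -/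
lemma aux_small_t {c S δ : ℝ} (hδ : 0 < δ)
    (h : ∀ t : ℝ, 0 < t → t < δ → 2 * t * c ≤ t ^ 2 * S) : c ≤ 0 := by
  by_contra hc
  push_neg at hc
  have hS : 0 < S := by
    have h1 := h (δ/2) (by linarith) (by linarith)
    nlinarith
  set t := min (δ/2) (c/S) with htdef
  have ht : 0 < t := lt_min (by linarith) (by positivity)
  have h2 := h t ht (lt_of_le_of_lt (min_le_left _ _) (by linarith))
  have h3 : t ≤ c/S := min_le_right _ _
  have h4 : (c/S)*S = c := div_mul_cancel₀ c (ne_of_gt hS)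
  have h5 : t*S*t ≤ t*S*(c/S) := mul_le_mul_of_nonneg_left h3 (by positivity)
  nlinarith [mul_pos ht hc]

lemma aux_cheb {ι : Type*} (B : Finset ι) (x y : ι → ℝ) (hmv : MonovaryOn x y B)
    (hx : ∑ i ∈ B, x i = 0) : 0 ≤ ∑ i ∈ B, x i * y i := by
  have h := hmv.sum_mul_sum_le_card_mul_sum
  rw [hx, zero_mul] at h
  rcases B.eq_empty_or_nonempty with h0 | h0
  · simp [h0]
  · have hc : (0:ℝ) < B.card := by exact_mod_cast Finset.card_pos.mpr h0
    nlinarith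

/-- For the isotonic residual `a = g(Xu⋆) - iso_{Xu}(g(Xu⋆))` of an `L`-Lipschitz
monotone `g`, with `u` a unit vector satisfying `⟨u, u⋆⟩ ≥ 0`, the inner product
with `X P_u^⊥ u⋆` is at least `(1/L) ‖a‖²`, where `P_u^⊥ u⋆ = u⋆ - ⟨u,u⋆⟩ u`. -/
theorem stmt_11 (n p : ℕ) (L : ℝ) (hL : 0 < L)
    (g : ℝ → ℝ)
    (hg : ∀ t0 t1 : ℝ, t0 ≤ t1 → 0 ≤ g t1 - g t0 ∧ g t1 - g t0 ≤ L * (t1 - t0))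
    (X : Fin n → Fin p → ℝ) (u ustar : Fin p → ℝ)
    (hunorm : ∑ j, u j ^ 2 = 1)
    (hinner : 0 ≤ ∑ j, u j * ustar j)
    (Xu : Fin n → ℝ) (hXu : Xu = fun i => ∑ j, X i j * u j)
    (w : Fin n → ℝ)
    (hmono : ∀ i j, Xu i ≤ Xu j → w i ≤ w j)
    (hmin : ∀ z : Fin n → ℝ, (∀ i j, Xu i ≤ Xu j → z i ≤ z j) →
      ∑ i, (g (∑ j, X i j * ustar j) - w i) ^ 2 ≤
        ∑ i, (g (∑ j, X i j * ustar j) - z i) ^ 2)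
    (a : Fin n → ℝ) (ha : a = fun i => g (∑ j, X i j * ustar j) - w i)
    (Pu : Fin p → ℝ) (hPu : Pu = fun j => ustar j - (∑ l, u l * ustar l) * u j) :
    (1 / L) * ∑ i, a i ^ 2 ≤ ∑ i, a i * ∑ j, X i j * Pu j := by
  -- abbreviations
  set s : Fin n → ℝ := fun i => ∑ j, X i j * ustar j with hs
  have ha' : ∀ i, a i = g (s i) - w i := fun i => by rw [ha]
  -- Step 0: basic quadratic expansion from minimality
  have key : ∀ z : Fin n → ℝ, (∀ i j, Xu i ≤ Xu j → z i ≤ z j) →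
      2 * (∑ i, a i * (z i - w i)) ≤ ∑ i, (z i - w i) ^ 2 := by
    intro z hz
    have h1 := hmin z hz
    have h2 : ∑ i, (g (s i) - z i) ^ 2
        = ∑ i, ((g (s i) - w i) ^ 2 - 2 * (a i * (z i - w i)) + (z i - w i) ^ 2) := by
      refine Finset.sum_congr rfl (fun i _ => ?_)
      rw [ha']; ring
    rw [h2, Finset.sum_add_distrib, Finset.sum_sub_distrib, ← Finset.mul_sum] at h1
    linarith
  -- polar inequality: residual has nonpositive inner product with monotone vectors
  have polar : ∀ q : Fin n → ℝ, (∀ i j, Xu i ≤ Xu j → q i ≤ q j) →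
      ∑ i, a i * q i ≤ 0 := by
    intro q hq
    refine aux_small_t (δ := 1) one_pos (S := ∑ i, q i ^ 2) ?_
    intro t ht _
    have hk := key (fun i => w i + t * q i) (by
      intro i j hij
      have h1 := hmono i j hij
      have h2 := hq i j hij
      show w i + t * q i ≤ w j + t * q j
      nlinarith [mul_le_mul_of_nonneg_left h2 ht.le])
    have e1 : ∑ i, a i * ((w i + t * q i) - w i) = t * ∑ i, a i * q i := by
      rw [Finset.mul_sum]; exact Finset.sum_congr rfl (fun i _ => by ring)
    have e2 : ∑ i, ((w i + t * q i) - w i) ^ 2 = t ^ 2 * ∑ i, q i ^ 2 := by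
      rw [Finset.mul_sum]; exact Finset.sum_congr rfl (fun i _ => by ring)
    simp only [e1, e2] at hk
    linarith
  -- reverse direction for special perturbations that stay monotone for small negative steps
  have ind_ge : ∀ q : Fin n → ℝ, (∃ δ : ℝ, 0 < δ ∧ ∀ t, 0 < t → t < δ →
      ∀ i j, Xu i ≤ Xu j → w i - t * q i ≤ w j - t * q j) →
      0 ≤ ∑ i, a i * q i := by
    intro q ⟨δ, hδ, hz⟩
    have h := aux_small_t (c := -∑ i, a i * q i) (S := ∑ i, q i ^ 2) hδ ?_
    · linarith
    intro t ht htδ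
    have hk := key (fun i => w i - t * q i) (hz t ht htδ)
    have e1 : ∑ i, a i * ((w i - t * q i) - w i) = -(t * ∑ i, a i * q i) := by
      rw [Finset.mul_sum, ← Finset.sum_neg_distrib]
      exact Finset.sum_congr rfl (fun i _ => by ring)
    have e2 : ∑ i, ((w i - t * q i) - w i) ^ 2 = t ^ 2 * ∑ i, q i ^ 2 := by
      rw [Finset.mul_sum]; exact Finset.sum_congr rfl (fun i _ => by ring)
    simp only [e1, e2] at hk
    linarith
  -- ⟨a, w⟩ = 0
  have aw : ∑ i, a i * w i = 0 := by
    have h1 : ∑ i, a i * w i ≤ 0 := polar w hmono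
    have h2 : 0 ≤ ∑ i, a i * w i := by
      refine ind_ge w ⟨1, one_pos, ?_⟩
      intro t ht ht1 i j hij
      have h3 := hmono i j hij
      nlinarith
    linarith
  -- upper-set indicator sums vanish (version with ≤)
  have up_le : ∀ c : ℝ, ∑ i, a i * (if c ≤ w i then (1:ℝ) else 0) = 0 := by
    intro c
    have hle : ∑ i, a i * (if c ≤ w i then (1:ℝ) else 0) ≤ 0 := by
      refine polar _ ?_
      intro i j hij
      have h1 := hmono i j hij
      by_cases h2 : c ≤ w i
      · simp [h2, le_trans h2 h1]
      · by_cases h3 : c ≤ w j <;> simp [h2, h3]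
    have hge : 0 ≤ ∑ i, a i * (if c ≤ w i then (1:ℝ) else 0) := by
      refine ind_ge _ ?_
      rcases (Finset.univ.filter (fun i => w i < c)).eq_empty_or_nonempty with hF | hF
      · refine ⟨1, one_pos, ?_⟩
        intro t ht ht1 i j hij
        have hall : ∀ i : Fin n, c ≤ w i := by
          intro i
          by_contra hcon
          push_neg at hcon
          have : i ∈ Finset.univ.filter (fun i => w i < c) := by
            simp [hcon]
          rw [hF] at this; exact absurd this (Finset.notMem_empty i)
        have h1 := hmono i j hij
        rw [if_pos (hall i), if_pos (hall j)]
        simp only [mul_one]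
        linarith
      · set F := Finset.univ.filter (fun i => w i < c) with hFd
        refine ⟨c - F.sup' hF w, ?_, ?_⟩
        · have : F.sup' hF w < c := by
            rw [Finset.sup'_lt_iff]
            intro b hb
            exact (Finset.mem_filter.mp hb).2
          linarith
        · intro t ht htδ i j hij
          have h1 := hmono i j hij
          by_cases h2 : c ≤ w i
          · have h3 : c ≤ w j := le_trans h2 h1
            rw [if_pos h2, if_pos h3]
            simp only [mul_one]
            linarith
          · push_neg at h2
            by_cases h3 : c ≤ w j
            · have hiF : i ∈ F := by simp [hFd, h2]
              have h4 : w i ≤ F.sup' hF w := Finset.le_sup' w hiF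
              rw [if_neg (not_le.mpr h2), if_pos h3]
              simp only [mul_zero, mul_one]
              linarith
            · rw [if_neg (not_le.mpr h2), if_neg h3]
              simp only [mul_zero]
              linarith
    linarith
  -- strict upper-set indicator sums vanish
  have up_lt : ∀ c : ℝ, ∑ i, a i * (if c < w i then (1:ℝ) else 0) = 0 := by
    intro c
    have hle : ∑ i, a i * (if c < w i then (1:ℝ) else 0) ≤ 0 := by
      refine polar _ ?_
      intro i j hij
      have h1 := hmono i j hij
      by_cases h2 : c < w i
      · simp [h2, lt_of_lt_of_le h2 h1]
      · by_cases h3 : c < w j <;> simp [h2, h3]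
    have hge : 0 ≤ ∑ i, a i * (if c < w i then (1:ℝ) else 0) := by
      refine ind_ge _ ?_
      rcases (Finset.univ.filter (fun i => c < w i)).eq_empty_or_nonempty with hG | hG
      · refine ⟨1, one_pos, ?_⟩
        intro t ht ht1 i j hij
        have hall : ∀ i : Fin n, ¬ c < w i := by
          intro i hcon
          have : i ∈ Finset.univ.filter (fun i => c < w i) := by simp [hcon]
          rw [hG] at this; exact absurd this (Finset.notMem_empty i)
        rw [if_neg (hall i), if_neg (hall j)]
        simp only [mul_zero]
        linarith [hmono i j hij]
      · set G := Finset.univ.filter (fun i => c < w i) with hGd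
        refine ⟨G.inf' hG w - c, ?_, ?_⟩
        · have : c < G.inf' hG w := by
            rw [Finset.lt_inf'_iff]
            intro b hb
            exact (Finset.mem_filter.mp hb).2
          linarith
        · intro t ht htδ i j hij
          have h1 := hmono i j hij
          by_cases h2 : c < w i
          · have h3 : c < w j := lt_of_lt_of_le h2 h1
            rw [if_pos h2, if_pos h3]
            simp only [mul_one]
            linarith
          · by_cases h3 : c < w j
            · have hjG : j ∈ G := by simp [hGd, h3]
              have h4 : G.inf' hG w ≤ w j := Finset.inf'_le w hjG
              push_neg at h2
              rw [if_neg (not_lt.mpr h2), if_pos h3]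
              simp only [mul_zero, mul_one]
              linarith
            · rw [if_neg h2, if_neg h3]
              simp only [mul_zero]
              linarith
    linarith
  -- fiber sums vanish
  have fiber_zero : ∀ c : ℝ, ∑ i ∈ Finset.univ.filter (fun i => w i = c), a i = 0 := by
    intro c
    have hdiff : ∑ i, a i * (if c ≤ w i then (1:ℝ) else 0)
        - ∑ i, a i * (if c < w i then (1:ℝ) else 0)
        = ∑ i ∈ Finset.univ.filter (fun i => w i = c), a i := by
      rw [← Finset.sum_sub_distrib, Finset.sum_filter]
      refine Finset.sum_congr rfl (fun i _ => ?_)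
      by_cases h2 : w i = c
      · simp [h2]
      · rcases lt_or_ge (w i) c with h3 | h3
        · rw [if_neg h2, if_neg (not_le.mpr h3), if_neg (not_lt.mpr h3.le)]
          ring
        · have h4 : c < w i := lt_of_le_of_ne h3 (fun hco => h2 hco.symm)
          rw [if_neg h2, if_pos h3, if_pos h4]
          ring
    rw [← hdiff, up_le, up_lt]
    ring
  -- monotone function φ(t) = t - g t / L
  have phi_mono : ∀ t0 t1 : ℝ, t0 ≤ t1 → t0 - g t0 / L ≤ t1 - g t1 / L := by
    intro t0 t1 h
    have h2 := (hg t0 t1 h).2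
    have h3 : (g t1 - g t0) / L ≤ t1 - t0 := by
      rw [div_le_iff₀ hL]; nlinarith
    have h4 : (g t1 - g t0) / L = g t1 / L - g t0 / L := by ring
    linarith
  -- main positivity:  0 ≤ Σ a_i (s_i - g(s_i)/L)
  have main_pos : 0 ≤ ∑ i, a i * (s i - g (s i) / L) := by
    have hfib := Finset.sum_fiberwise_of_maps_to
      (g := w) (f := fun i => a i * (s i - g (s i) / L))
      (s := Finset.univ) (t := Finset.univ.image w)
      (fun x _ => Finset.mem_image_of_mem w (Finset.mem_univ x))
    rw [← hfib]
    refine Finset.sum_nonneg (fun c _ => ?_)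
    have := aux_cheb (Finset.univ.filter (fun i => w i = c))
      (fun i => a i) (fun i => s i - g (s i) / L) ?_ (fiber_zero c)
    · exact this
    · intro i hi j hj hy
      simp only [Finset.mem_coe, Finset.mem_filter] at hi hj
      have hy' : s i - g (s i) / L < s j - g (s j) / L := hy
      have hsij : s i ≤ s j := by
        by_contra hcon
        push_neg at hcon
        exact absurd (phi_mono (s j) (s i) hcon.le) (not_le.mpr hy')
      have hgij := (hg (s i) (s j) hsij).1
      show a i ≤ a j
      rw [ha' i, ha' j, hi.2, hj.2]
      linarith
  -- ⟨a, Xu⟩ ≤ 0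
  have aXu : ∑ i, a i * Xu i ≤ 0 := polar Xu (fun i j h => h)
  -- ⟨a, g∘s⟩ = ‖a‖²
  have av : ∑ i, a i * g (s i) = ∑ i, a i ^ 2 := by
    have h1 : ∑ i, a i * g (s i) = ∑ i, (a i ^ 2 + a i * w i) := by
      refine Finset.sum_congr rfl (fun i _ => ?_)
      rw [ha']; ring
    rw [h1, Finset.sum_add_distrib, aw, add_zero]
  -- ⟨a, s⟩ ≥ (1/L)‖a‖²
  have as_ge : (1 / L) * ∑ i, a i ^ 2 ≤ ∑ i, a i * s i := by
    have h1 : ∑ i, a i * (s i - g (s i) / L)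
        = ∑ i, a i * s i - (1 / L) * ∑ i, a i * g (s i) := by
      rw [Finset.mul_sum, ← Finset.sum_sub_distrib]
      refine Finset.sum_congr rfl (fun i _ => ?_)
      field_simp
    rw [h1, av] at main_pos
    linarith
  -- final assembly
  have hfin : ∑ i, a i * ∑ j, X i j * Pu j
      = ∑ i, a i * s i - (∑ l, u l * ustar l) * ∑ i, a i * Xu i := by
    rw [Finset.mul_sum, ← Finset.sum_sub_distrib]
    refine Finset.sum_congr rfl (fun i _ => ?_)
    have e : ∑ j, X i j * Pu j = s i - (∑ l, u l * ustar l) * Xu i := by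
      rw [hPu, hXu]
      simp only [hs]
      rw [Finset.mul_sum, ← Finset.sum_sub_distrib]
      exact Finset.sum_congr rfl (fun j _ => by ring)
    rw [e]
    ring
  rw [hfin]
  have hc0 : (∑ l, u l * ustar l) * ∑ i, a i * Xu i ≤ 0 :=
    mul_nonpos_of_nonneg_of_nonpos hinner aXu
  linarith
end

section
/- Let x in R^n be non-decreasing with total variation x_n - x_1 <= Lt, and let iso denote isotonic projection with respect to the natural order. For any integer N >= 1, there exist indices 0 = k_0 < k_1 < ... < k_M = n with M <= 2N - 1 such that for every m, both x_{k_m} - x_{k_{m-1}+1} <= Lt/N and, for any second non-decreasing vector v with v_n - v_1 <= Lt, v_{k_m} - v_{k_{m-1}+1} <= Lt/N. -/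
/-- Level-set partition of a monotone `ℕ`-valued function. -/
lemma aux_partition (g : ℕ → ℕ) (hg : Monotone g) :
    ∀ n : ℕ, 1 ≤ n →
    ∃ M : ℕ, ∃ k : ℕ → ℕ, 1 ≤ M ∧ M + g 1 ≤ g n + 1 ∧ k 0 = 0 ∧ k M = n ∧
      (∀ m < M, k m < k (m + 1)) ∧
      ∀ m, 1 ≤ m → m ≤ M → g (k m) = g (k (m - 1) + 1) := by
  intro n
  induction n using Nat.strong_induction_on with
  | _ n ih =>
    intro hn
    have hex : ∃ i, 1 ≤ i ∧ g i = g n := ⟨n, hn, rfl⟩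
    set j := Nat.find hex with hj
    obtain ⟨hj1, hjg⟩ : 1 ≤ j ∧ g j = g n := Nat.find_spec hex
    have hjn : j ≤ n := Nat.find_le ⟨hn, rfl⟩
    rcases eq_or_lt_of_le hj1 with h1 | h2
    · -- j = 1 : single block
      have hg1 : g 1 = g n := by rw [h1]; exact hjg
      refine ⟨1, fun m => if m = 0 then 0 else n, le_refl 1, by omega, rfl, rfl, ?_, ?_⟩
      · intro m hm
        interval_cases m
        norm_num
        exact hn
      · intro m hm1 hm2
        have hm : m = 1 := le_antisymm hm2 hm1
        subst hm
        norm_num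
        exact hg1.symm
    · -- 2 ≤ j
      have h2j : 2 ≤ j := h2
      have hlt : j - 1 < n := by omega
      have hgl : g (j - 1) < g n := by
        have hle : g (j - 1) ≤ g n := hg (by omega)
        have hne : ¬ (1 ≤ j - 1 ∧ g (j - 1) = g n) := Nat.find_min hex (by omega)
        rcases lt_or_eq_of_le hle with h | h
        · exact h
        · exact absurd ⟨by omega, h⟩ hne
      obtain ⟨M', k', hM1, hMcnt, hk0, hkM, hkstrict, hkblk⟩ := ih (j - 1) hlt (by omega)
      refine ⟨M' + 1, fun m => if m ≤ M' then k' m else n, ?_, ?_, ?_, ?_, ?_, ?_⟩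
      · omega
      · omega
      · simp [hM1, hk0]
      · simp
      · intro m hm
        by_cases hmM : m < M'
        · simp only [if_pos (le_of_lt hmM), if_pos (Nat.succ_le_of_lt hmM)]
          exact hkstrict m hmM
        · have hmE : m = M' := by omega
          rw [hmE]
          simp only [le_refl, if_pos, if_neg (by omega : ¬ M' + 1 ≤ M'), hkM]
          omega
      · intro m hm1 hm2
        by_cases hmM : m ≤ M'
        · simp only [if_pos hmM, if_pos (by omega : m - 1 ≤ M')]
          exact hkblk m hm1 hmM
        · have hmE : m = M' + 1 := by omega
          rw [hmE]
          simp only [if_neg (by omega : ¬ M' + 1 ≤ M'), Nat.add_sub_cancel,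
            if_pos (le_refl M'), hkM]
          rw [(by omega : j - 1 + 1 = j), hjg]

/-- Key real lemma: same clamped floor value forces closeness. -/
lemma aux_close (N : ℕ) (hN : 1 ≤ N) (Lt a b : ℝ) (hLt : 0 < Lt)
    (ha : 0 ≤ a) (hab : a ≤ b) (hb : b ≤ Lt)
    (h : min (⌊a * N / Lt⌋.toNat) (N - 1) = min (⌊b * N / Lt⌋.toNat) (N - 1)) :
    b - a ≤ Lt / N := by
  have hN0 : (0:ℝ) < N := by exact_mod_cast hN
  set A := a * N / Lt with hA
  set B := b * N / Lt with hB
  have hA0 : 0 ≤ A := by positivity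
  have hAB : A ≤ B := by
    rw [hA, hB]
    gcongr
  have hBN : B ≤ N := by
    rw [hB, div_le_iff₀ hLt]
    calc b * N ≤ Lt * N := mul_le_mul_of_nonneg_right hb (le_of_lt hN0)
    _ = N * Lt := by ring
  have hfA0 : 0 ≤ ⌊A⌋ := Int.floor_nonneg.mpr hA0
  have hfAB : ⌊A⌋ ≤ ⌊B⌋ := Int.floor_le_floor hAB
  have key : B - A ≤ 1 := by
    by_cases hfB : ⌊B⌋.toNat ≤ N - 1
    · have hfA : ⌊A⌋.toNat ≤ N - 1 := le_trans (Int.toNat_le_toNat hfAB) hfB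
      rw [min_eq_left hfA, min_eq_left hfB] at h
      have heq : ⌊A⌋ = ⌊B⌋ := by
        have := Int.toNat_of_nonneg hfA0
        have := Int.toNat_of_nonneg (le_trans hfA0 hfAB)
        omega
      have h1 : B < ⌊B⌋ + 1 := Int.lt_floor_add_one B
      have h2 : (⌊A⌋ : ℝ) ≤ A := Int.floor_le A
      rw [← heq] at h1
      linarith
    · rw [min_eq_right (by omega : N - 1 ≤ ⌊B⌋.toNat)] at h
      have hfA : N - 1 ≤ ⌊A⌋.toNat := by omega
      have h2 : ((N - 1 : ℕ) : ℝ) ≤ A := by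
        calc ((N - 1 : ℕ) : ℝ) ≤ (⌊A⌋.toNat : ℝ) := by exact_mod_cast hfA
        _ = (⌊A⌋ : ℝ) := by exact_mod_cast Int.toNat_of_nonneg hfA0
        _ ≤ A := Int.floor_le A
      have hcast : ((N - 1 : ℕ) : ℝ) = (N : ℝ) - 1 := by
        rw [Nat.cast_sub hN]; norm_num
      rw [hcast] at h2
      linarith
  rw [le_div_iff₀ hN0]
  have h3 : (B - A) * Lt = (b - a) * N := by
    rw [hA, hB]; field_simp
  have h4 : (B - A) * Lt ≤ 1 * Lt := mul_le_mul_of_nonneg_right key (le_of_lt hLt)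
  linarith

/-- Partitioning two non-decreasing vectors of range at most `Lt` into at most
`2N - 1` consecutive blocks, on each of which both vectors vary by at most
`Lt/N`. Indices are 1-based: the blocks are `{k_{m-1}+1, …, k_m}`. -/
theorem stmt_12 (n N : ℕ) (hn : 1 ≤ n) (hN : 1 ≤ N) (Lt : ℝ) (hLt : 0 ≤ Lt)
    (x v : ℕ → ℝ) (hx : Monotone x) (hv : Monotone v)
    (hxr : x n - x 1 ≤ Lt) (hvr : v n - v 1 ≤ Lt) :
    ∃ M : ℕ, ∃ k : ℕ → ℕ, 1 ≤ M ∧ M ≤ 2 * N - 1 ∧ k 0 = 0 ∧ k M = n ∧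
      (∀ m < M, k m < k (m + 1)) ∧
      ∀ m, 1 ≤ m → m ≤ M →
        x (k m) - x (k (m - 1) + 1) ≤ Lt / N ∧
        v (k m) - v (k (m - 1) + 1) ≤ Lt / N := by
  rcases eq_or_lt_of_le hLt with hLt0 | hLtpos
  · -- Lt = 0 : one block suffices
    refine ⟨1, fun m => if m = 0 then 0 else n, le_refl 1, by omega, rfl, rfl, ?_, ?_⟩
    · intro m hm
      interval_cases m
      norm_num
      exact hn
    · intro m hm1 hm2
      have hm : m = 1 := le_antisymm hm2 hm1
      subst hm
      have hdiv : Lt / N = Lt := by rw [← hLt0]; simp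
      norm_num [hdiv]
      constructor <;> linarith
  · -- 0 < Lt
    set F : ℝ → ℕ := fun t => min (⌊t * N / Lt⌋.toNat) (N - 1) with hF
    have hFmono : ∀ s t : ℝ, s ≤ t → F s ≤ F t := by
      intro s t hst
      refine min_le_min (Int.toNat_le_toNat (Int.floor_le_floor ?_)) le_rfl
      gcongr
    set g : ℕ → ℕ := fun j => F (x j - x 1) + F (v j - v 1) with hg
    have hgmono : Monotone g := fun i j hij =>
      add_le_add (hFmono _ _ (by linarith [hx hij])) (hFmono _ _ (by linarith [hv hij]))
    obtain ⟨M, k, hM1, hMcnt, hk0, hkM, hkstrict, hkblk⟩ := aux_partition g hgmono n hn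
    have hg1 : g 1 = 0 := by
      simp [hg, hF]
    have hgn : g n ≤ 2 * N - 2 := by
      have h1 := min_le_right (⌊(x n - x 1) * N / Lt⌋.toNat) (N - 1)
      have h2 := min_le_right (⌊(v n - v 1) * N / Lt⌋.toNat) (N - 1)
      simp only [hg, hF]
      omega
    have hkle : ∀ m ≤ M, k m ≤ n := by
      have step : ∀ d m, m + d ≤ M → k m ≤ k (m + d) := by
        intro d
        induction d with
        | zero => intro m _; simp
        | succ d ihd =>
          intro m h
          have h1 := hkstrict (m + d) (by omega)
          have h2 := ihd m (by omega)
          have e : k (m + (d + 1)) = k (m + d + 1) := rfl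
          omega
      intro m hm
      have := step (M - m) m (by omega)
      rwa [(by omega : m + (M - m) = M), hkM] at this
    refine ⟨M, k, hM1, by omega, hk0, hkM, hkstrict, ?_⟩
    intro m hm1 hm2
    have hlt : k (m - 1) < k m := by
      have := hkstrict (m - 1) (by omega)
      rwa [(by omega : m - 1 + 1 = m)] at this
    have hkmn : k m ≤ n := hkle m hm2
    have hgeq := hkblk m hm1 hm2
    have hxle : x (k (m - 1) + 1) ≤ x (k m) := hx hlt
    have hvle : v (k (m - 1) + 1) ≤ v (k m) := hv hlt
    have hle1 : F (x (k (m - 1) + 1) - x 1) ≤ F (x (k m) - x 1) :=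
      hFmono _ _ (by linarith)
    have hle2 : F (v (k (m - 1) + 1) - v 1) ≤ F (v (k m) - v 1) :=
      hFmono _ _ (by linarith)
    have hgeq' : F (x (k m) - x 1) + F (v (k m) - v 1)
        = F (x (k (m - 1) + 1) - x 1) + F (v (k (m - 1) + 1) - v 1) := hgeq
    have heqx : F (x (k (m - 1) + 1) - x 1) = F (x (k m) - x 1) := by omega
    have heqv : F (v (k (m - 1) + 1) - v 1) = F (v (k m) - v 1) := by omega
    have h1x : x 1 ≤ x (k (m - 1) + 1) := hx (by omega)
    have h1v : v 1 ≤ v (k (m - 1) + 1) := hv (by omega)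
    have hxn : x (k m) ≤ x n := hx hkmn
    have hvn : v (k m) ≤ v n := hv hkmn
    constructor
    · have := aux_close N hN Lt (x (k (m - 1) + 1) - x 1) (x (k m) - x 1) hLtpos
        (by linarith) (by linarith) (by linarith) heqx
      linarith
    · have := aux_close N hN Lt (v (k (m - 1) + 1) - v 1) (v (k m) - v 1) hLtpos
        (by linarith) (by linarith) (by linarith) heqv
      linarith
end
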